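/- arXiv:1112.3932 — 4 statements merged into one kernel-verified Lean document; each statement's English description precedes it below -/
import Mathlib

section
/- For every natural number n, there exists a sign assignment for the n-dimensional cube C(n); that is, there exists a function s assigning to each edge (v, i) of C(n) an element of ZMod 2 such that for every square of C(n), determined by a vertex v and distinct indices i, j with v i = 0 and v j = 0, one has s(v, i) + s(v + e_j, i) + s(v, j) + s(v + e_i, j) = 1 in ZMod 2. -/
/-- For every `n` there exists a sign assignment for the `n`-dimensional cube `C(n)`:
a `ZMod 2`-valued 1-cochain `s` (a function on edges `(v, i)` with `v i = 0`) such that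
on every square of `C(n)`, determined by a vertex `v` and distinct indices `i`, `j`
with `v i = 0` and `v j = 0`, the sum of the values of `s` on the four boundary edges
`(v, i)`, `(v + e_j, i)`, `(v, j)`, `(v + e_i, j)` is `1`. -/
theorem exists_sign_assignment (n : ℕ) :
    ∃ s : (Fin n → ZMod 2) → Fin n → ZMod 2,
      ∀ (v : Fin n → ZMod 2) (i j : Fin n), i ≠ j → v i = 0 → v j = 0 →
        s v i + s (v + Pi.single j 1) i + s v j + s (v + Pi.single i 1) j = 1 := by
  refine ⟨fun v i => ∑ k ∈ Finset.univ.filter (· < i), v k, fun v i j hij hvi hvj => ?_⟩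
  have key : ∀ a b : Fin n, (∑ k ∈ Finset.univ.filter (· < a), ((v + Pi.single b 1 : Fin n → ZMod 2) k))
      = (∑ k ∈ Finset.univ.filter (· < a), v k) + (if b < a then 1 else 0) := by
    intro a b
    simp only [Pi.add_apply, Finset.sum_add_distrib]
    congr 1
    rw [Finset.sum_pi_single']
    simp [Finset.mem_filter]
  simp only []
  rw [key i j, key j i]
  have : i < j ∨ j < i := hij.lt_or_gt
  rcases this with h | h
  · rw [if_pos h, if_neg (asymm h)]; ring_nf; simp [show (2 : ZMod 2) = 0 from rfl]
  · rw [if_pos h, if_neg (asymm h)]; ring_nf; simp [show (2 : ZMod 2) = 0 from rfl]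
end

section
/- Any two sign assignments for the n-dimensional cube are gauge equivalent: if s and s' are sign assignments for C(n), then there exists a function t : (Fin n → ZMod 2) → ZMod 2 such that s(v, i) + s'(v, i) = t(v) + t(v + e_i) in ZMod 2 for every edge (v, i) of C(n). -/
/-- Truncation of a cube vertex: zero out all coordinates `≥ k`. -/
def cubeTrunc {n : ℕ} (v : Fin n → ZMod 2) (k : Fin n) : Fin n → ZMod 2 :=
  fun j => if (j : ℕ) < (k : ℕ) then v j else 0

lemma cubeTrunc_add_single {n : ℕ} (v : Fin n → ZMod 2) {i k : Fin n}
    (h : (k : ℕ) ≤ (i : ℕ)) : cubeTrunc (v + Pi.single i 1) k = cubeTrunc v k := by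
  funext j
  simp only [cubeTrunc, Pi.add_apply]
  split
  · next hj =>
    rw [Pi.single_eq_of_ne (by exact Fin.ne_of_val_ne (by omega)), add_zero]
  · rfl

lemma cubeTrunc_eq_self {n : ℕ} (v : Fin n → ZMod 2) {i : Fin n}
    (hi : v i = 0) (htop : ∀ k : Fin n, (i : ℕ) < (k : ℕ) → v k = 0) :
    cubeTrunc v i = v := by
  funext j
  simp only [cubeTrunc]
  split
  · rfl
  · next hj =>
    rcases eq_or_ne j i with rfl | hne
    · exact hi.symm
    · refine (htop j ?_).symm
      have h1 : (i : ℕ) ≤ (j : ℕ) := Nat.not_lt.mp hj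
      have h2 : (i : ℕ) ≠ (j : ℕ) := fun h => hne (Fin.ext h.symm)
      omega

/-- Any closed 1-cochain on the cube is a coboundary. -/
lemma cube_closed_is_coboundary (n : ℕ) (f : (Fin n → ZMod 2) → Fin n → ZMod 2)
    (hf : ∀ (v : Fin n → ZMod 2) (i j : Fin n), i ≠ j → v i = 0 → v j = 0 →
      f v i + f (v + Pi.single j 1) i + f v j + f (v + Pi.single i 1) j = 0) :
    ∃ t : (Fin n → ZMod 2) → ZMod 2,
      ∀ (v : Fin n → ZMod 2) (i : Fin n), v i = 0 →
        f v i = t v + t (v + Pi.single i 1) := by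
  have h2 : ∀ a b c : ZMod 2, a + b = c → a = b + c := by decide
  have h2' : ∀ a b c : ZMod 2, a = b + c → c = b + a := by decide
  have h4 : ∀ A B C D : ZMod 2, A + B + C + D = 0 → A + D = C + B := by decide
  set t : (Fin n → ZMod 2) → ZMod 2 :=
    fun v => ∑ k : Fin n, v k * f (cubeTrunc v k) k with ht
  -- base step: no nonzero coordinates above i
  have step_base : ∀ (v : Fin n → ZMod 2) (i : Fin n), v i = 0 →
      (∀ k : Fin n, (i : ℕ) < (k : ℕ) → v k = 0) →
      t (v + Pi.single i 1) = t v + f v i := by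
    intro v i hi htop
    have key : t (v + Pi.single i 1) + t v = f v i := by
      rw [ht]
      rw [← Finset.sum_add_distrib]
      rw [Finset.sum_eq_single i]
      · rw [cubeTrunc_add_single v (le_refl _), cubeTrunc_eq_self v hi htop]
        simp [hi, Pi.single_eq_same]
      · intro k _ hk
        by_cases hlt : (k : ℕ) < (i : ℕ)
        · rw [cubeTrunc_add_single v (le_of_lt hlt), Pi.add_apply,
            Pi.single_eq_of_ne hk, add_zero]
          exact CharTwo.add_self_eq_zero _
        · have hik : (i : ℕ) < (k : ℕ) :=
            lt_of_le_of_ne (by omega) (Fin.val_ne_of_ne hk).symm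
          rw [Pi.add_apply, Pi.single_eq_of_ne hk, add_zero, htop k hik]
          simp
      · intro h; exact absurd (Finset.mem_univ i) h
    exact (h2 _ _ _ key)
  have main : ∀ (m : ℕ) (v : Fin n → ZMod 2) (i : Fin n), v i = 0 →
      (Finset.univ.filter (fun k : Fin n => (i : ℕ) < (k : ℕ) ∧ v k ≠ 0)).card = m →
      t (v + Pi.single i 1) = t v + f v i := by
    intro m
    induction m with
    | zero =>
      intro v i hi hc
      apply step_base v i hi
      intro k hk
      by_contra hvk
      have hmem : k ∈ Finset.univ.filter (fun k : Fin n => (i : ℕ) < (k : ℕ) ∧ v k ≠ 0) :=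
        Finset.mem_filter.mpr ⟨Finset.mem_univ k, hk, hvk⟩
      rw [Finset.card_eq_zero] at hc
      rw [hc] at hmem
      exact absurd hmem (Finset.notMem_empty k)
    | succ m ih =>
      intro v i hi hc
      set S := Finset.univ.filter (fun k : Fin n => (i : ℕ) < (k : ℕ) ∧ v k ≠ 0) with hS
      have hne : S.Nonempty := Finset.card_pos.mp (by omega)
      set j := S.max' hne with hjdef
      have hjS : j ∈ S := S.max'_mem hne
      have hj : (i : ℕ) < (j : ℕ) ∧ v j ≠ 0 := by
        have := hjS; rw [hS, Finset.mem_filter] at this; exact this.2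
      have hij : i ≠ j := Fin.ne_of_val_ne (by omega)
      have hvj1 : v j = 1 := (by decide : ∀ x : ZMod 2, x ≠ 0 → x = 1) _ hj.2
      set w : Fin n → ZMod 2 := v + Pi.single j 1 with hw
      have hwj : w j = 0 := by
        rw [hw, Pi.add_apply, Pi.single_eq_same, hvj1]; decide
      have hwi : w i = 0 := by
        rw [hw, Pi.add_apply, Pi.single_eq_of_ne hij, hi, add_zero]
      have hwk : ∀ k : Fin n, (j : ℕ) < (k : ℕ) → w k = 0 := by
        intro k hk
        have hkS : k ∉ S := by
          intro hkmem
          have := S.le_max' k hkmem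
          omega
        have hknj : k ≠ j := Fin.ne_of_val_ne (by omega)
        have hvk : v k = 0 := by
          rw [hS, Finset.mem_filter] at hkS
          push_neg at hkS
          exact hkS (Finset.mem_univ k) (by omega)
        rw [hw, Pi.add_apply, Pi.single_eq_of_ne hknj, hvk, add_zero]
      have hwv : w + Pi.single j 1 = v := by
        funext k
        rcases eq_or_ne k j with rfl | hkj
        · simp [hw, Pi.add_apply, Pi.single_eq_same, hvj1]; decide
        · simp [hw, Pi.add_apply, Pi.single_eq_of_ne hkj]
      -- t v = t w + f w j
      have h1 : t v = t w + f w j := by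
        rw [← hwv]; exact step_base w j hwj hwk
      -- t ((w + e i) + e j) = t (w + e i) + f (w + e i) j
      have hwij : ((w + Pi.single i 1 : Fin n → ZMod 2)) j = 0 := by
        rw [Pi.add_apply, Pi.single_eq_of_ne hij.symm, hwj, add_zero]
      have hwik : ∀ k : Fin n, (j : ℕ) < (k : ℕ) → ((w + Pi.single i 1 : Fin n → ZMod 2)) k = 0 := by
        intro k hk
        have : k ≠ i := Fin.ne_of_val_ne (by omega)
        rw [Pi.add_apply, Pi.single_eq_of_ne this, hwk k hk, add_zero]
      have h2step : t ((w + Pi.single i 1) + Pi.single j 1)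
          = t (w + Pi.single i 1) + f (w + Pi.single i 1) j :=
        step_base (w + Pi.single i 1) j hwij hwik
      have hcomm : (w + Pi.single i 1) + Pi.single j 1 = v + Pi.single i 1 := by
        rw [add_right_comm, hwv]
      -- IH for (w, i)
      have hSw : Finset.univ.filter (fun k : Fin n => (i : ℕ) < (k : ℕ) ∧ w k ≠ 0)
          = S.erase j := by
        ext k
        constructor
        · intro hk
          rw [Finset.mem_filter] at hk
          obtain ⟨-, hik, hwk0⟩ := hk
          have hkj : k ≠ j := fun h => hwk0 (h ▸ hwj)
          rw [Finset.mem_erase, hS, Finset.mem_filter]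
          refine ⟨hkj, Finset.mem_univ k, hik, ?_⟩
          rwa [hw, Pi.add_apply, Pi.single_eq_of_ne hkj, add_zero] at hwk0
        · intro hk
          rw [Finset.mem_erase, hS, Finset.mem_filter] at hk
          obtain ⟨hkj, -, hik, hvk⟩ := hk
          rw [Finset.mem_filter]
          exact ⟨Finset.mem_univ k, hik, by
            rwa [hw, Pi.add_apply, Pi.single_eq_of_ne hkj, add_zero]⟩
      have hcard : (Finset.univ.filter
          (fun k : Fin n => (i : ℕ) < (k : ℕ) ∧ w k ≠ 0)).card = m := by
        rw [hSw, Finset.card_erase_of_mem hjS]; omega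
      have h3 : t (w + Pi.single i 1) = t w + f w i := ih w i hwi hcard
      -- cocycle
      have hcoc : f w i + f v i + f w j + f (w + Pi.single i 1) j = 0 := by
        have := hf w i j hij hwi hwj
        rwa [hwv] at this
      have h4' : f w i + f (w + Pi.single i 1) j = f w j + f v i := h4 _ _ _ _ hcoc
      calc t (v + Pi.single i 1) = t ((w + Pi.single i 1) + Pi.single j 1) := by rw [hcomm]
        _ = t (w + Pi.single i 1) + f (w + Pi.single i 1) j := h2step
        _ = (t w + f w i) + f (w + Pi.single i 1) j := by rw [h3]
        _ = t w + (f w i + f (w + Pi.single i 1) j) := by ring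
        _ = t w + (f w j + f v i) := by rw [h4']
        _ = (t w + f w j) + f v i := by ring
        _ = t v + f v i := by rw [h1]
  refine ⟨t, fun v i hi => ?_⟩
  exact h2' _ _ _ (main _ v i hi rfl)

/-- Any two sign assignments for the `n`-dimensional cube are gauge equivalent:
their difference is the coboundary of a 0-cochain `t`. -/
theorem sign_assignments_gauge_equivalent (n : ℕ)
    (s s' : (Fin n → ZMod 2) → Fin n → ZMod 2)
    (hs : ∀ (v : Fin n → ZMod 2) (i j : Fin n), i ≠ j → v i = 0 → v j = 0 →
      s v i + s (v + Pi.single j 1) i + s v j + s (v + Pi.single i 1) j = 1)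
    (hs' : ∀ (v : Fin n → ZMod 2) (i j : Fin n), i ≠ j → v i = 0 → v j = 0 →
      s' v i + s' (v + Pi.single j 1) i + s' v j + s' (v + Pi.single i 1) j = 1) :
    ∃ t : (Fin n → ZMod 2) → ZMod 2,
      ∀ (v : Fin n → ZMod 2) (i : Fin n), v i = 0 →
        s v i + s' v i = t v + t (v + Pi.single i 1) := by
  have hcomb : ∀ a1 a2 a3 a4 b1 b2 b3 b4 : ZMod 2,
      a1 + a2 + a3 + a4 = 1 → b1 + b2 + b3 + b4 = 1 →
      (a1 + b1) + (a2 + b2) + (a3 + b3) + (a4 + b4) = 0 := by decide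
  obtain ⟨t, ht⟩ := cube_closed_is_coboundary n (fun v i => s v i + s' v i)
    (fun v i j hij hvi hvj =>
      hcomb _ _ _ _ _ _ _ _ (hs v i j hij hvi hvj) (hs' v i j hij hvi hvj))
  exact ⟨t, fun v i hi => ht v i hi⟩
end

section
/- Every ZMod 2-valued 2-cocycle on the n-dimensional cube is a coboundary: let c be a 2-cochain on C(n), i.e., a function assigning to each square (v, i, j) (with i ≠ j, v i = 0, v j = 0) an element c(v, i, j) ∈ ZMod 2 satisfying c(v, i, j) = c(v, j, i). Suppose that for every vertex v and pairwise distinct indices i, j, k with v i = v j = v k = 0, one has c(v, i, j) + c(v + e_k, i, j) + c(v, i, k) + c(v + e_j, i, k) + c(v, j, k) + c(v + e_i, j, k) = 0 in ZMod 2. Then there exists a 1-cochain s on C(n) such that c(v, i, j) = s(v, i) + s(v + e_j, i) + s(v, j) + s(v + e_i, j) for every square (v, i, j). (This is the combinatorial content of the vanishing H²(C(n); F₂) = 0 used in the paper to produce sign assignments.) -/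
open Finset

/-- Truncation: zero out all coordinates with index `≥ m`. -/
private def Tr {n : ℕ} (v : Fin n → ZMod 2) (m : ℕ) : Fin n → ZMod 2 :=
  fun k => if (k : ℕ) < m then v k else 0

private lemma Tr_apply_lt {n} (v : Fin n → ZMod 2) {m : ℕ} {x : Fin n} (h : (x:ℕ) < m) :
    Tr v m x = v x := if_pos h

private lemma Tr_apply_ge {n} (v : Fin n → ZMod 2) {m : ℕ} {x : Fin n} (h : m ≤ (x:ℕ)) :
    Tr v m x = 0 := if_neg (by omega)

private lemma Tr_top {n} (v : Fin n → ZMod 2) : Tr v n = v := by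
  funext x; exact Tr_apply_lt v x.isLt

private lemma Tr_succ_zero {n} (v : Fin n → ZMod 2) (k : Fin n) (h : v k = 0) :
    Tr v ((k:ℕ) + 1) = Tr v (k:ℕ) := by
  funext x
  by_cases hx : (x:ℕ) < (k:ℕ)
  · rw [Tr_apply_lt v (by omega), Tr_apply_lt v hx]
  · by_cases hx2 : (x:ℕ) < (k:ℕ) + 1
    · have hxk : x = k := Fin.ext (by omega)
      rw [Tr_apply_lt v hx2, Tr_apply_ge v (by omega), hxk, h]
    · rw [Tr_apply_ge v (by omega), Tr_apply_ge v (by omega)]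

private lemma Tr_add_single {n} (v : Fin n → ZMod 2) (k : Fin n) (h : v k = 1) :
    Tr v (k:ℕ) + Pi.single k 1 = Tr v ((k:ℕ) + 1) := by
  funext x
  by_cases hxk : x = k
  · subst hxk
    simp only [Pi.add_apply, Pi.single_eq_same]
    rw [Tr_apply_ge v le_rfl, Tr_apply_lt v (by omega), h, zero_add]
  · have hxk' : (x:ℕ) ≠ (k:ℕ) := fun e => hxk (Fin.ext e)
    simp only [Pi.add_apply, Pi.single_eq_of_ne hxk, add_zero]
    by_cases hx : (x:ℕ) < (k:ℕ)
    · rw [Tr_apply_lt v hx, Tr_apply_lt v (by omega)]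
    · rw [Tr_apply_ge v (by omega), Tr_apply_ge v (by omega)]

private lemma Tr_single_le {n} (v : Fin n → ZMod 2) (j : Fin n) {m : ℕ} (h : m ≤ (j:ℕ)) :
    Tr (v + Pi.single j 1) m = Tr v m := by
  funext x
  by_cases hx : (x:ℕ) < m
  · have hxj : x ≠ j := fun e => by rw [e] at hx; omega
    rw [Tr_apply_lt _ hx, Tr_apply_lt v hx]
    simp [Pi.single_eq_of_ne hxj]
  · rw [Tr_apply_ge _ (by omega), Tr_apply_ge v (by omega)]

private lemma Tr_single_lt {n} (v : Fin n → ZMod 2) (j : Fin n) {m : ℕ} (h : (j:ℕ) < m) :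
    Tr (v + Pi.single j 1) m = Tr v m + Pi.single j 1 := by
  funext x
  by_cases hx : (x:ℕ) < m
  · rw [Pi.add_apply, Tr_apply_lt _ hx, Tr_apply_lt v hx, Pi.add_apply]
  · have hxj : x ≠ j := fun e => by rw [e] at hx; omega
    rw [Pi.add_apply, Tr_apply_ge _ (by omega), Tr_apply_ge v (by omega)]
    simp [Pi.single_eq_of_ne hxj]

/-- Telescoping sum in characteristic two. -/
private lemma tel (g : ℕ → ZMod 2) (a b : ℕ) (h : a ≤ b) :
    ∑ m ∈ Finset.Ico a b, (g m + g (m+1)) = g a + g b := by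
  induction b, h using Nat.le_induction with
  | base => simp [CharTwo.add_self_eq_zero]
  | succ b hb ih =>
    rw [Finset.sum_Ico_succ_top (by omega), ih]
    have h2 := CharTwo.add_self_eq_zero (g b)
    linear_combination h2

/-- Every `ZMod 2`-valued 2-cocycle on the `n`-dimensional cube is a coboundary:
if `c` is a symmetric 2-cochain on squares whose sum over the six boundary squares
of every 3-dimensional cube vanishes, then `c` is the coboundary of a 1-cochain `s`. -/
theorem cube_two_cocycle_is_coboundary (n : ℕ)
    (c : (Fin n → ZMod 2) → Fin n → Fin n → ZMod 2)
    (hsymm : ∀ (v : Fin n → ZMod 2) (i j : Fin n), i ≠ j → v i = 0 → v j = 0 →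
      c v i j = c v j i)
    (hc : ∀ (v : Fin n → ZMod 2) (i j k : Fin n),
      i ≠ j → i ≠ k → j ≠ k → v i = 0 → v j = 0 → v k = 0 →
      c v i j + c (v + Pi.single k 1) i j + c v i k + c (v + Pi.single j 1) i k +
        c v j k + c (v + Pi.single i 1) j k = 0) :
    ∃ s : (Fin n → ZMod 2) → Fin n → ZMod 2,
      ∀ (v : Fin n → ZMod 2) (i j : Fin n), i ≠ j → v i = 0 → v j = 0 →
        c v i j = s v i + s (v + Pi.single j 1) i + s v j + s (v + Pi.single i 1) j := by
  classical
  have hz : ∀ x : ZMod 2, ¬ x = 1 → x = 0 := by decide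
  set S : (Fin n → ZMod 2) → Fin n → ZMod 2 := fun v i =>
    ∑ k : Fin n, if (i:ℕ) < (k:ℕ) ∧ v k = 1 then c (Tr v (k:ℕ)) i k else 0 with hS
  have key : ∀ (v : Fin n → ZMod 2) (i j : Fin n), (i:ℕ) < (j:ℕ) → v i = 0 → v j = 0 →
      c v i j = S v i + S (v + Pi.single j 1) i + S v j + S (v + Pi.single i 1) j := by
    intro v i j hij hvi hvj
    have hijne : i ≠ j := fun e => by rw [e] at hij; omega
    set g : ℕ → ZMod 2 := fun m => c (Tr v m) i j with hg
    set G : ℕ → ZMod 2 := fun m =>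
      if (j:ℕ) < m then g m + g (m+1) else if m = (j:ℕ) then g (j:ℕ) else 0 with hG
    have hkey : ∀ k : Fin n,
        ((if (i:ℕ) < (k:ℕ) ∧ v k = 1 then c (Tr v (k:ℕ)) i k else 0) +
         (if (i:ℕ) < (k:ℕ) ∧ (v + Pi.single j 1 : Fin n → ZMod 2) k = 1 then
            c (Tr (v + Pi.single j 1 : Fin n → ZMod 2) (k:ℕ)) i k else 0) +
         (if (j:ℕ) < (k:ℕ) ∧ v k = 1 then c (Tr v (k:ℕ)) j k else 0) +
         (if (j:ℕ) < (k:ℕ) ∧ (v + Pi.single i 1 : Fin n → ZMod 2) k = 1 then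
            c (Tr (v + Pi.single i 1 : Fin n → ZMod 2) (k:ℕ)) j k else 0)) = G (k:ℕ) := by
      intro k
      rcases lt_trichotomy (k:ℕ) (j:ℕ) with hk | hk | hk
      · -- k < j : everything cancels
        have hkj : k ≠ j := fun e => by rw [e] at hk; omega
        have h1 : (v + Pi.single j 1 : Fin n → ZMod 2) k = v k := by
          simp [Pi.single_eq_of_ne hkj]
        have h2 : Tr (v + Pi.single j 1 : Fin n → ZMod 2) (k:ℕ) = Tr v (k:ℕ) :=
          Tr_single_le v j (le_of_lt hk)
        have h3 : ¬ ((j:ℕ) < (k:ℕ)) := by omega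
        have hGk : G (k:ℕ) = 0 := by
          simp only [hG]
          rw [if_neg h3, if_neg (by omega : ¬ (k:ℕ) = (j:ℕ))]
        rw [h1, h2, hGk]
        have h5 : ¬ ((j:ℕ) < (k:ℕ) ∧ v k = 1) := fun h => h3 h.1
        have h6 : ¬ ((j:ℕ) < (k:ℕ) ∧ (v + Pi.single i 1 : Fin n → ZMod 2) k = 1) :=
          fun h => h3 h.1
        rw [if_neg h5, if_neg h6]
        by_cases h4 : (i:ℕ) < (k:ℕ) ∧ v k = 1
        · rw [if_pos h4]
          simp [CharTwo.add_self_eq_zero]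
        · rw [if_neg h4]
          simp
      · -- k = j
        have hkj : k = j := Fin.ext hk
        subst hkj
        have h1 : (v + Pi.single k 1 : Fin n → ZMod 2) k = 1 := by simp [hvj]
        have h2 : Tr (v + Pi.single k 1 : Fin n → ZMod 2) (k:ℕ) = Tr v (k:ℕ) :=
          Tr_single_le v k le_rfl
        have h3 : ¬ ((k:ℕ) < (k:ℕ)) := lt_irrefl _
        have hvk1 : ¬ (v k = 1) := by rw [hvj]; decide
        have hGk : G (k:ℕ) = c (Tr v (k:ℕ)) i k := by simp [hG, hg, h3]
        rw [hGk, h2]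
        simp [h3, hvk1, hij, h1]
      · -- j < k
        have hik : (i:ℕ) < (k:ℕ) := by omega
        have hkj : k ≠ j := fun e => by rw [e] at hk; omega
        have hki : k ≠ i := fun e => by rw [e] at hik; omega
        have h1 : (v + Pi.single j 1 : Fin n → ZMod 2) k = v k := by
          simp [Pi.single_eq_of_ne hkj]
        have h2 : (v + Pi.single i 1 : Fin n → ZMod 2) k = v k := by
          simp [Pi.single_eq_of_ne hki]
        have h3 : Tr (v + Pi.single j 1 : Fin n → ZMod 2) (k:ℕ) = Tr v (k:ℕ) + Pi.single j 1 :=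
          Tr_single_lt v j hk
        have h4 : Tr (v + Pi.single i 1 : Fin n → ZMod 2) (k:ℕ) = Tr v (k:ℕ) + Pi.single i 1 :=
          Tr_single_lt v i hik
        rw [h1, h2, h3, h4]
        by_cases hvk : v k = 1
        · have hw := Tr_add_single v k hvk
          have hwi : Tr v (k:ℕ) i = 0 := by rw [Tr_apply_lt v hik]; exact hvi
          have hwj : Tr v (k:ℕ) j = 0 := by rw [Tr_apply_lt v hk]; exact hvj
          have hwk : Tr v (k:ℕ) k = 0 := Tr_apply_ge v le_rfl
          have hjk : j ≠ k := fun e => hkj e.symm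
          have hik' : i ≠ k := fun e => hki e.symm
          have E := hc (Tr v (k:ℕ)) i j k hijne hik' hjk hwi hwj hwk
          have hGk : G (k:ℕ) = c (Tr v (k:ℕ)) i j + c (Tr v ((k:ℕ)+1)) i j := by
            simp [hG, hg, hk]
          rw [hGk, ← hw]
          simp only [hik, hk, hvk, and_true, if_true]
          have h5 := CharTwo.add_self_eq_zero (c (Tr v (k:ℕ)) i j)
          have h6 := CharTwo.add_self_eq_zero (c (Tr v (k:ℕ) + Pi.single k 1) i j)
          linear_combination E - h5 - h6
        · have hvk0 : v k = 0 := hz _ hvk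
          have hGk : G (k:ℕ) = 0 := by
            simp only [hG, hg, hk, if_true]
            rw [Tr_succ_zero v k hvk0]
            exact CharTwo.add_self_eq_zero _
          rw [hGk]
          simp [hvk]
    have hsplit : S v i + S (v + Pi.single j 1) i + S v j + S (v + Pi.single i 1) j
        = ∑ m ∈ Finset.range n, G m := by
      rw [hS]
      simp only
      rw [← Finset.sum_add_distrib, ← Finset.sum_add_distrib, ← Finset.sum_add_distrib]
      rw [Finset.sum_congr rfl (fun k _ => hkey k)]
      exact Fin.sum_univ_eq_sum_range G n
    rw [hsplit]
    have hjn : (j:ℕ) + 1 ≤ n := j.isLt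
    rw [Finset.range_eq_Ico, ← Finset.sum_Ico_consecutive _ (Nat.zero_le ((j:ℕ)+1)) hjn]
    have hpart1 : ∑ m ∈ Finset.Ico 0 ((j:ℕ)+1), G m = g (j:ℕ) := by
      have h0 : ∀ m ∈ Finset.Ico 0 ((j:ℕ)+1), m ≠ (j:ℕ) → G m = 0 := by
        intro m hm hmj
        have hm' : m < (j:ℕ) + 1 := (Finset.mem_Ico.mp hm).2
        simp only [hG]
        rw [if_neg (by omega : ¬ (j:ℕ) < m), if_neg hmj]
      rw [Finset.sum_eq_single_of_mem (j:ℕ) (by simp) h0]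
      simp [hG]
    have hpart2 : ∑ m ∈ Finset.Ico ((j:ℕ)+1) n, G m = g ((j:ℕ)+1) + g n := by
      rw [Finset.sum_congr rfl (fun m hm => by
        have h := (Finset.mem_Ico.mp hm).1
        simp only [hG]
        rw [if_pos (by omega : (j:ℕ) < m)])]
      exact tel g _ _ hjn
    rw [hpart1, hpart2]
    have hgj : g ((j:ℕ)+1) = g (j:ℕ) := by rw [hg]; simp only; rw [Tr_succ_zero v j hvj]
    have hgn : g n = c v i j := by rw [hg]; simp only; rw [Tr_top]
    rw [hgj, ← hgn]
    have h5 := CharTwo.add_self_eq_zero (g (j:ℕ))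
    linear_combination -h5
  refine ⟨S, ?_⟩
  intro v i j hij hvi hvj
  rcases lt_trichotomy (i:ℕ) (j:ℕ) with h | h | h
  · exact key v i j h hvi hvj
  · exact absurd (Fin.ext h) hij
  · rw [hsymm v i j hij hvi hvj, key v j i h hvj hvi]; ring
end

section
/- Sign assignments extend over one more cube dimension: let s⁰ and s¹ be sign assignments for C(n). Then there exists a sign assignment s for C(n+1) whose restrictions to the two codimension-one faces {v : Fin (n+1) → ZMod 2 | v 0 = 0} and {v | v 0 = 1} are s⁰ and s¹ respectively. Concretely, embedding a vertex v of C(n) into C(n+1) as Fin.cons ε v for ε ∈ ZMod 2, and the edge (v, i) of C(n) as the edge (Fin.cons ε v, Fin.succ i) of C(n+1), there exists a sign assignment s for C(n+1) such that s(Fin.cons 0 v, Fin.succ i) = s⁰(v, i) and s(Fin.cons 1 v, Fin.succ i) = s¹(v, i) for every edge (v, i) of C(n). -/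
private lemma two_z : (2 : ZMod 2) = 0 := rfl

private lemma zmod2_cases (x : ZMod 2) : x = 0 ∨ x = 1 := by revert x; decide

private lemma cons_add_single_succ {n : ℕ} (ε : ZMod 2) (v : Fin n → ZMod 2) (i : Fin n) :
    (Fin.cons ε v : Fin (n+1) → ZMod 2) + Pi.single i.succ 1
      = Fin.cons ε (v + Pi.single i 1) := by
  funext j
  rcases Fin.eq_zero_or_eq_succ j with rfl | ⟨k, rfl⟩
  · simp [Pi.single_apply, eq_comm, Fin.succ_ne_zero]
  · simp [Pi.single_apply, Fin.succ_inj]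

private lemma tail_add_single_succ {n : ℕ} (w : Fin (n+1) → ZMod 2) (i : Fin n) :
    Fin.tail (w + Pi.single i.succ 1) = Fin.tail w + Pi.single i 1 := by
  funext k
  simp [Fin.tail, Pi.single_apply, Fin.succ_inj]

private lemma tail_add_single_zero {n : ℕ} (w : Fin (n+1) → ZMod 2) :
    Fin.tail (w + Pi.single (0 : Fin (n+1)) 1) = Fin.tail w := by
  funext k
  simp [Fin.tail, Pi.single_apply, Fin.succ_ne_zero]

private lemma apply_zero_add_single_succ {n : ℕ} (w : Fin (n+1) → ZMod 2) (i : Fin n) :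
    (w + Pi.single i.succ 1 : Fin (n+1) → ZMod 2) 0 = w 0 := by
  simp [Pi.single_apply, eq_comm, Fin.succ_ne_zero]

private lemma apply_zero_add_single_zero {n : ℕ} (w : Fin (n+1) → ZMod 2) (h : w 0 = 0) :
    (w + Pi.single (0 : Fin (n+1)) 1 : Fin (n+1) → ZMod 2) 0 = 1 := by
  simp [Pi.single_apply, h]

private lemma exists_potential : ∀ (n : ℕ) (g : (Fin n → ZMod 2) → Fin n → ZMod 2),
    (∀ v i j, i ≠ j → v i = 0 → v j = 0 →
      g v i + g (v + Pi.single j 1) i + g v j + g (v + Pi.single i 1) j = 0) →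
    ∃ f : (Fin n → ZMod 2) → ZMod 2, ∀ v i, v i = 0 → f (v + Pi.single i 1) = f v + g v i
  | 0, g, _ => ⟨fun _ => 0, fun _ i => i.elim0⟩
  | (n+1), g, hg => by
    obtain ⟨f', hf'⟩ := exists_potential n (fun v k => g (Fin.cons 0 v) k.succ) (by
      intro v i j hij hvi hvj
      have := hg (Fin.cons 0 v) i.succ j.succ (by simpa [Fin.succ_inj] using hij)
        (by simpa using hvi) (by simpa using hvj)
      simpa [cons_add_single_succ] using this)
    refine ⟨fun w => if w 0 = 0 then f' (Fin.tail w)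
      else f' (Fin.tail w) + g (Fin.cons 0 (Fin.tail w)) 0, ?_⟩
    intro w i hwi
    beta_reduce
    rcases Fin.eq_zero_or_eq_succ i with rfl | ⟨k, rfl⟩
    · have h1 : (w + Pi.single (0 : Fin (n+1)) 1 : Fin (n+1) → ZMod 2) 0 = 1 := apply_zero_add_single_zero w hwi
      have hw : Fin.cons (0 : ZMod 2) (Fin.tail w) = w := by
        rw [← hwi]; exact Fin.cons_self_tail w
      rw [if_pos hwi, h1, if_neg (by decide : (1 : ZMod 2) ≠ 0), tail_add_single_zero, hw]
    · have h0 : (w + Pi.single k.succ 1 : Fin (n+1) → ZMod 2) 0 = w 0 := apply_zero_add_single_succ w k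
      have htk : Fin.tail w k = 0 := hwi
      rcases zmod2_cases (w 0) with h | h
      · have hw : Fin.cons (0 : ZMod 2) (Fin.tail w) = w := by
          rw [← h]; exact Fin.cons_self_tail w
        rw [h0, if_pos h, if_pos h, tail_add_single_succ, hf' (Fin.tail w) k htk, hw]
      · have h1 : w 0 ≠ 0 := by rw [h]; decide
        have key := hg (Fin.cons 0 (Fin.tail w)) 0 k.succ (Fin.succ_ne_zero k).symm
          (by simp) (by simpa using htk)
        have hw : Fin.cons (0 : ZMod 2) (Fin.tail w) + Pi.single 0 1 = w := by
          have : Fin.cons (0 : ZMod 2) (Fin.tail w) + Pi.single 0 1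
              = Fin.cons (0 + 1 : ZMod 2) (Fin.tail w) := by
            funext j
            rcases Fin.eq_zero_or_eq_succ j with rfl | ⟨m, rfl⟩
            · simp
            · simp [Pi.single_apply, Fin.succ_ne_zero]
          rw [this, show (0 : ZMod 2) + 1 = w 0 by rw [h]; decide, Fin.cons_self_tail]
        rw [cons_add_single_succ, hw] at key
        rw [h0, if_neg h1, if_neg h1, tail_add_single_succ, hf' (Fin.tail w) k htk]
        linear_combination key - (g (Fin.cons 0 (Fin.tail w)) 0 + g w k.succ) * two_z

/-- Sign assignments extend over one more cube dimension: given sign assignments `s⁰`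
and `s¹` for `C(n)`, there is a sign assignment `s` for `C(n+1)` restricting to `s⁰` on
the face `{v | v 0 = 0}` and to `s¹` on the face `{v | v 0 = 1}`, where a vertex `v` of
`C(n)` embeds into `C(n+1)` as `Fin.cons ε v` and the edge `(v, i)` as
`(Fin.cons ε v, Fin.succ i)`. -/
theorem sign_assignment_extends (n : ℕ)
    (s₀ s₁ : (Fin n → ZMod 2) → Fin n → ZMod 2)
    (hs₀ : ∀ (v : Fin n → ZMod 2) (i j : Fin n), i ≠ j → v i = 0 → v j = 0 →
      s₀ v i + s₀ (v + Pi.single j 1) i + s₀ v j + s₀ (v + Pi.single i 1) j = 1)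
    (hs₁ : ∀ (v : Fin n → ZMod 2) (i j : Fin n), i ≠ j → v i = 0 → v j = 0 →
      s₁ v i + s₁ (v + Pi.single j 1) i + s₁ v j + s₁ (v + Pi.single i 1) j = 1) :
    ∃ s : (Fin (n + 1) → ZMod 2) → Fin (n + 1) → ZMod 2,
      (∀ (v : Fin (n + 1) → ZMod 2) (i j : Fin (n + 1)), i ≠ j → v i = 0 → v j = 0 →
        s v i + s (v + Pi.single j 1) i + s v j + s (v + Pi.single i 1) j = 1) ∧
      (∀ (v : Fin n → ZMod 2) (i : Fin n), v i = 0 →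
        s (Fin.cons 0 v) i.succ = s₀ v i) ∧
      (∀ (v : Fin n → ZMod 2) (i : Fin n), v i = 0 →
        s (Fin.cons 1 v) i.succ = s₁ v i) := by
  obtain ⟨f, hf⟩ := exists_potential n (fun v k => 1 + s₀ v k + s₁ v k) (by
    intro v i j hij hvi hvj
    have h0 := hs₀ v i j hij hvi hvj
    have h1 := hs₁ v i j hij hvi hvj
    linear_combination h0 + h1 + 3 * two_z)
  refine ⟨fun w => Fin.cases (f (Fin.tail w))
    (fun k => if w 0 = 0 then s₀ (Fin.tail w) k else s₁ (Fin.tail w) k), ?_, ?_, ?_⟩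
  · intro w i j hij hwi hwj
    beta_reduce
    rcases Fin.eq_zero_or_eq_succ i with rfl | ⟨k, rfl⟩ <;>
      rcases Fin.eq_zero_or_eq_succ j with rfl | ⟨l, rfl⟩
    · exact absurd rfl hij
    · -- i = 0, j = l.succ
      have htl : Fin.tail w l = 0 := hwj
      have hkey := hf (Fin.tail w) l htl
      rw [Fin.cases_zero, Fin.cases_zero, Fin.cases_succ, Fin.cases_succ,
        tail_add_single_succ, tail_add_single_zero, hkey, if_pos hwi,
        apply_zero_add_single_zero w hwi, if_neg (by decide : (1 : ZMod 2) ≠ 0)]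
      linear_combination (f (Fin.tail w) + s₀ (Fin.tail w) l + s₁ (Fin.tail w) l) * two_z
    · -- i = k.succ, j = 0
      have htk : Fin.tail w k = 0 := hwi
      have hkey := hf (Fin.tail w) k htk
      rw [Fin.cases_zero, Fin.cases_zero, Fin.cases_succ, Fin.cases_succ,
        tail_add_single_succ, tail_add_single_zero, hkey, if_pos hwj,
        apply_zero_add_single_zero w hwj, if_neg (by decide : (1 : ZMod 2) ≠ 0)]
      linear_combination (f (Fin.tail w) + s₀ (Fin.tail w) k + s₁ (Fin.tail w) k) * two_z
    · -- i = k.succ, j = l.succ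
      have hkl : k ≠ l := fun h => hij (by rw [h])
      have htk : Fin.tail w k = 0 := hwi
      have htl : Fin.tail w l = 0 := hwj
      rw [Fin.cases_succ, Fin.cases_succ, Fin.cases_succ, Fin.cases_succ,
        tail_add_single_succ, tail_add_single_succ,
        apply_zero_add_single_succ, apply_zero_add_single_succ]
      rcases zmod2_cases (w 0) with h | h
      · rw [if_pos h, if_pos h, if_pos h, if_pos h]
        exact hs₀ (Fin.tail w) k l hkl htk htl
      · have h1 : w 0 ≠ 0 := by rw [h]; decide
        rw [if_neg h1, if_neg h1, if_neg h1, if_neg h1]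
        exact hs₁ (Fin.tail w) k l hkl htk htl
  · intro v i _
    simp
  · intro v i _
    simp
end
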